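/- arXiv:1812.00260 — 2 statements merged into one kernel-verified Lean document; each statement's English description precedes it below -/
import Mathlib

section
/- (Finite-dimensional law and exchangeability of the beta-Stacy urn system.) For every n ≥ 1 and every t_{1:n} ∈ ℕ₊^n, ρ(T_1 = t_1, …, T_n = t_n) = ∏_{s≥1} [α_s^{(d_s)} · β_s^{(w_s)} / (α_s + β_s)^{(d_s + w_s)}], where d_s = #{i ≤ n : t_i = s}, w_s = #{i ≤ n : t_i > s}, and x^{(k)} = x(x+1)⋯(x+k−1) denotes the ascending factorial (the product over s has only finitely many factors ≠ 1). In particular this probability is invariant under every permutation of (t_1,…,t_n), so the sequence (T_n)_{n≥1} generated by the beta-Stacy urn system is exchangeable. -/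
open MeasureTheory

/-! # Setup

`c(s) > 0` for every `s ∈ ℕ+` and `F0` is a probability mass function on `ℕ+` with
`F0({s}) > 0` for all `s`; set `α_s = c(s)F0({s})` and `β_s = c(s)F0((s,∞))`.  `ρ` is the
law on `ℕ+^{ℕ+}` (paths `ω : ℕ → ℕ+`, `ω (n-1)` being the `n`-th generated value `T_n`)
of the sequence generated by the beta-Stacy system of Pólya urns, characterized by its
predictive survival functions
`ρ(T_{n+1} > t | T_{1:n} = t_{1:n}) = ∏_{s=1}^t [1 - (α_s + d_s)/(α_s + β_s + d_s + w_s)]`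
with `d_s = #{i ≤ n : t_i = s}` and `w_s = #{i ≤ n : t_i > s}` (hypothesis `hρ`). -/

instance : MeasurableSpace ℕ+ := ⊤

noncomputable def survF0 (F0 : ℕ+ → ENNReal) (s : ℕ+) : ENNReal :=
  ∑' r : ℕ+, if s < r then F0 r else 0

/-- The ascending factorial `x^{(k)} = x (x+1) ⋯ (x+k-1)`. -/
noncomputable def ascFac (x : ENNReal) (k : ℕ) : ENNReal :=
  ∏ h ∈ Finset.range k, (x + h)

/-- `d_s = #{i < n : t_i = s}` for the first `n` values of `tv`. -/
noncomputable def dCount (tv : ℕ → ℕ+) (n : ℕ) (s : ℕ+) : ℕ :=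
  ((Finset.range n).filter (fun i => tv i = s)).card

/-- `w_s = #{i < n : t_i > s}` for the first `n` values of `tv`. -/
noncomputable def wCount (tv : ℕ → ℕ+) (n : ℕ) (s : ℕ+) : ℕ :=
  ((Finset.range n).filter (fun i => s < tv i)).card

namespace BetaStacyAux

lemma ascFac_zero (x : ENNReal) : ascFac x 0 = 1 := by simp [ascFac]

lemma ascFac_succ (x : ENNReal) (k : ℕ) : ascFac x (k+1) = ascFac x k * (x + k) :=
  Finset.prod_range_succ _ _

lemma ascFac_ne_top {x : ENNReal} (hx : x ≠ ⊤) (k : ℕ) : ascFac x k ≠ ⊤ := by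
  refine (ENNReal.prod_lt_top fun a _ => ?_).ne
  exact ENNReal.add_lt_top.2 ⟨hx.lt_top, ENNReal.natCast_lt_top a⟩

lemma ascFac_ne_zero {x : ENNReal} (hx : x ≠ 0) (k : ℕ) : ascFac x k ≠ 0 := by
  rw [ascFac, Finset.prod_ne_zero_iff]
  intro a _ H
  exact hx (by simpa using (add_eq_zero.mp H).1)

lemma dCount_succ (tv : ℕ → ℕ+) (n : ℕ) (s : ℕ+) :
    dCount tv (n+1) s = dCount tv n s + (if tv n = s then 1 else 0) := by
  unfold dCount
  rw [Finset.range_add_one, Finset.filter_insert]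
  split_ifs with h
  · rw [Finset.card_insert_of_notMem (by simp)]
  · simp

lemma wCount_succ (tv : ℕ → ℕ+) (n : ℕ) (s : ℕ+) :
    wCount tv (n+1) s = wCount tv n s + (if s < tv n then 1 else 0) := by
  unfold wCount
  rw [Finset.range_add_one, Finset.filter_insert]
  split_ifs with h
  · rw [Finset.card_insert_of_notMem (by simp)]
  · simp

lemma mul_div_mul' {A x M z : ENNReal} (hM0 : M ≠ 0) (hz0 : z ≠ 0) :
    (A * x) / (M * z) = (A / M) * (x / z) := by
  rw [div_eq_mul_inv, ENNReal.mul_inv (Or.inl hM0) (Or.inr hz0), div_eq_mul_inv,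
    div_eq_mul_inv, mul_mul_mul_comm]

lemma one_sub_div_eq {a b D : ENNReal} (hD : D = a + b) (ha : a ≠ ⊤) (hb : b ≠ ⊤)
    (hD0 : D ≠ 0) : 1 - a / D = b / D := by
  have hDt : D ≠ ⊤ := by rw [hD]; exact ENNReal.add_ne_top.2 ⟨ha, hb⟩
  have h1 : a / D + b / D = 1 := by
    rw [ENNReal.div_add_div_same, ← hD, ENNReal.div_self hD0 hDt]
  exact ENNReal.sub_eq_of_eq_add (ENNReal.div_lt_top ha hD0).ne (by rw [← h1, add_comm])

end BetaStacyAux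

namespace BetaStacyAux

noncomputable def qfun (c F0 : ℕ+ → ENNReal) (tv : ℕ → ℕ+) (n : ℕ) (j : ℕ) : ENNReal :=
  (c j.succPNat * F0 j.succPNat + dCount tv n j.succPNat) /
    (c j.succPNat * F0 j.succPNat + c j.succPNat * survF0 F0 j.succPNat +
      dCount tv n j.succPNat + wCount tv n j.succPNat)

noncomputable def gfac (c F0 : ℕ+ → ENNReal) (tv : ℕ → ℕ+) (n : ℕ) (s : ℕ+) : ENNReal :=
  ascFac (c s * F0 s) (dCount tv n s) * ascFac (c s * survF0 F0 s) (wCount tv n s) /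
    ascFac (c s * F0 s + c s * survF0 F0 s) (dCount tv n s + wCount tv n s)

variable {c F0 : ℕ+ → ENNReal}

lemma F0_le_one (hF0sum : ∑' s, F0 s = 1) (s : ℕ+) : F0 s ≤ 1 :=
  hF0sum ▸ ENNReal.le_tsum s

lemma surv_le_one (hF0sum : ∑' s, F0 s = 1) (s : ℕ+) : survF0 F0 s ≤ 1 := by
  refine le_trans (ENNReal.tsum_le_tsum (fun r => ?_)) hF0sum.le
  split <;> simp

lemma alpha_ne_zero (hc : ∀ s, 0 < c s ∧ c s ≠ ⊤) (hF0 : ∀ s, 0 < F0 s) (s : ℕ+) :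
    c s * F0 s ≠ 0 :=
  (ENNReal.mul_pos (hc s).1.ne' (hF0 s).ne').ne'

lemma alpha_ne_top (hc : ∀ s, 0 < c s ∧ c s ≠ ⊤) (hF0sum : ∑' s, F0 s = 1) (s : ℕ+) :
    c s * F0 s ≠ ⊤ :=
  ENNReal.mul_ne_top (hc s).2 (ne_top_of_le_ne_top ENNReal.one_ne_top (F0_le_one hF0sum s))

lemma beta_ne_top (hc : ∀ s, 0 < c s ∧ c s ≠ ⊤) (hF0sum : ∑' s, F0 s = 1) (s : ℕ+) :
    c s * survF0 F0 s ≠ ⊤ :=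
  ENNReal.mul_ne_top (hc s).2 (ne_top_of_le_ne_top ENNReal.one_ne_top (surv_le_one hF0sum s))

lemma gfac_step (hc : ∀ s, 0 < c s ∧ c s ≠ ⊤) (hF0 : ∀ s, 0 < F0 s)
    (hF0sum : ∑' s, F0 s = 1) (tv : ℕ → ℕ+) (n j : ℕ) :
    gfac c F0 tv (n+1) j.succPNat =
      gfac c F0 tv n j.succPNat *
        (if j + 1 < (tv n : ℕ) then 1 - qfun c F0 tv n j
         else if j + 1 = (tv n : ℕ) then qfun c F0 tv n j else 1) := by
  set s := j.succPNat with hs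
  have hsc : (s : ℕ) = j + 1 := rfl
  have hα0 : c s * F0 s ≠ 0 := alpha_ne_zero hc hF0 s
  have hαt : c s * F0 s ≠ ⊤ := alpha_ne_top hc hF0sum s
  have hβt : c s * survF0 F0 s ≠ ⊤ := beta_ne_top hc hF0sum s
  set α := c s * F0 s with hαdef
  set β := c s * survF0 F0 s with hβdef
  set d := dCount tv n s with hddef
  set w := wCount tv n s with hwdef
  have hq : qfun c F0 tv n j = (α + d) / (α + β + d + w) := rfl
  have hDeq : α + β + (d : ENNReal) + w = (α + (d : ENNReal)) + (β + (w : ENNReal)) := by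
    ring
  have hD0 : α + β + (d : ENNReal) + w ≠ 0 := by
    intro h
    rw [hDeq] at h
    exact hα0 (by simpa using (add_eq_zero.mp (add_eq_zero.mp h).1).1)
  have hαd : α + (d : ENNReal) ≠ ⊤ := ENNReal.add_ne_top.2 ⟨hαt, ENNReal.natCast_ne_top d⟩
  have hβw : β + (w : ENNReal) ≠ ⊤ := ENNReal.add_ne_top.2 ⟨hβt, ENNReal.natCast_ne_top w⟩
  have hab0 : α + β ≠ 0 := fun h => hα0 (add_eq_zero.mp h).1
  have hd1 : dCount tv (n+1) s = d + (if tv n = s then 1 else 0) := dCount_succ tv n s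
  have hw1 : wCount tv (n+1) s = w + (if s < tv n then 1 else 0) := wCount_succ tv n s
  have hgfn : gfac c F0 tv n s =
      ascFac α d * ascFac β w / ascFac (α + β) (d + w) := rfl
  have hgfs : gfac c F0 tv (n+1) s =
      ascFac α (dCount tv (n+1) s) * ascFac β (wCount tv (n+1) s) /
        ascFac (α + β) (dCount tv (n+1) s + wCount tv (n+1) s) := rfl
  have h2 : (α + β) + (((d + w : ℕ)) : ENNReal) = α + β + (d : ENNReal) + w := by
    push_cast; ring
  rcases lt_trichotomy (j + 1) ((tv n : ℕ)) with hlt | heq | hgt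
  · -- s < tv n : w ↦ w + 1
    rw [if_pos hlt]
    have hne : tv n ≠ s := by intro h; rw [h] at hlt; omega
    have hslt : s < tv n := by rw [← PNat.coe_lt_coe]; omega
    rw [hgfs, hgfn, hd1, hw1, if_neg hne, if_pos hslt]
    simp only [Nat.add_zero]
    have h1 : d + (w + 1) = (d + w) + 1 := by omega
    rw [h1, ascFac_succ, ascFac_succ, ← mul_assoc, h2,
      mul_div_mul' (ascFac_ne_zero hab0 _) hD0]
    congr 1
    rw [hq]
    exact (one_sub_div_eq hDeq hαd hβw hD0).symm
  · -- s = tv n : d ↦ d + 1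
    rw [if_neg (by omega), if_pos heq]
    have heqs : tv n = s := PNat.coe_injective (by omega)
    have hnlt : ¬ s < tv n := by rw [← PNat.coe_lt_coe]; omega
    rw [hgfs, hgfn, hd1, hw1, if_pos heqs, if_neg hnlt]
    simp only [Nat.add_zero]
    have h1 : (d + 1) + w = (d + w) + 1 := by omega
    have h3 : ascFac α d * (α + (d : ENNReal)) * ascFac β w =
        (ascFac α d * ascFac β w) * (α + (d : ENNReal)) := by ring
    rw [h1, ascFac_succ, ascFac_succ, h3, h2,
      mul_div_mul' (ascFac_ne_zero hab0 _) hD0, hq]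
  · -- s > tv n : unchanged
    have hne : tv n ≠ s := by intro h; rw [h] at hgt; omega
    have hnlt : ¬ s < tv n := by rw [← PNat.coe_lt_coe]; omega
    rw [if_neg (by omega), if_neg (by omega), hgfs, hgfn, hd1, hw1,
      if_neg hne, if_neg hnlt]
    simp only [Nat.add_zero, mul_one]

end BetaStacyAux

namespace BetaStacyAux

variable {c F0 : ℕ+ → ENNReal}

lemma counts_zero (tv : ℕ → ℕ+) (m : ℕ) {N : ℕ}
    (hN : ∀ i < m, (tv i : ℕ) ≤ N) {s : ℕ+} (hs : N < (s : ℕ)) :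
    dCount tv m s = 0 ∧ wCount tv m s = 0 := by
  constructor
  · unfold dCount
    rw [Finset.card_eq_zero, Finset.filter_eq_empty_iff]
    intro i hi h
    have h2 := hN i (Finset.mem_range.1 hi)
    rw [h] at h2
    omega
  · unfold wCount
    rw [Finset.card_eq_zero, Finset.filter_eq_empty_iff]
    intro i hi h
    have h2 := hN i (Finset.mem_range.1 hi)
    have h3 : (s : ℕ) < (tv i : ℕ) := (PNat.coe_lt_coe _ _).2 h
    omega

lemma tprod_step (hc : ∀ s, 0 < c s ∧ c s ≠ ⊤) (hF0 : ∀ s, 0 < F0 s)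
    (hF0sum : ∑' s, F0 s = 1) (tv : ℕ → ℕ+) (n : ℕ) :
    ∏' s : ℕ+, gfac c F0 tv (n+1) s =
      (∏' s : ℕ+, gfac c F0 tv n s) *
        ((∏ j ∈ Finset.range ((tv n : ℕ) - 1), (1 - qfun c F0 tv n j)) *
          qfun c F0 tv n ((tv n : ℕ) - 1)) := by
  classical
  set t := (tv n : ℕ) with htdef
  have ht1 : 1 ≤ t := (tv n).pos
  set N := (Finset.range (n+1)).sup (fun i => (tv i : ℕ)) with hNdef
  have hNb : ∀ i < n + 1, (tv i : ℕ) ≤ N := fun i hi =>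
    Finset.le_sup (f := fun i => (tv i : ℕ)) (Finset.mem_range.2 hi)
  have htN : t ≤ N := hNb n (Nat.lt_succ_self n)
  have hone : ∀ m ≤ n + 1, ∀ s : ℕ+, N < (s : ℕ) → gfac c F0 tv m s = 1 := by
    intro m hm s hs
    obtain ⟨hd, hw⟩ := counts_zero tv m (fun i hi => hNb i (lt_of_lt_of_le hi hm)) hs
    simp [gfac, hd, hw, ascFac_zero]
  set T : Finset ℕ+ := (Finset.range N).map ⟨Nat.succPNat, Nat.succPNat_injective⟩ with hTdef
  have hmem : ∀ s : ℕ+, s ∉ T → N < (s : ℕ) := by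
    intro s hsT
    by_contra h
    push_neg at h
    refine hsT (Finset.mem_map.2 ⟨(s : ℕ) - 1, Finset.mem_range.2 ?_, ?_⟩)
    · have := s.pos; omega
    · have := s.pos
      apply PNat.coe_injective
      simp only [Function.Embedding.coeFn_mk, Nat.succPNat_coe]
      omega
  rw [tprod_eq_prod (s := T) (fun b hb => hone (n+1) le_rfl b (hmem b hb)),
    tprod_eq_prod (s := T) (fun b hb => hone n (Nat.le_succ n) b (hmem b hb)),
    hTdef, Finset.prod_map, Finset.prod_map]
  simp only [Function.Embedding.coeFn_mk]
  have hstep : ∀ j ∈ Finset.range N, gfac c F0 tv (n+1) j.succPNat =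
      gfac c F0 tv n j.succPNat *
        (if j + 1 < t then 1 - qfun c F0 tv n j
         else if j + 1 = t then qfun c F0 tv n j else 1) :=
    fun j _ => gfac_step hc hF0 hF0sum tv n j
  rw [Finset.prod_congr rfl hstep, Finset.prod_mul_distrib]
  congr 1
  set M : ℕ → ENNReal := fun j =>
    if j + 1 < t then 1 - qfun c F0 tv n j
    else if j + 1 = t then qfun c F0 tv n j else 1 with hMdef
  have hMgt : ∀ j, t ≤ j + 1 → j + 1 ≠ t → M j = 1 := by
    intro j h1 h2
    rw [hMdef]
    simp only
    rw [if_neg (by omega), if_neg h2]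
  have hsub : ∏ j ∈ Finset.range N, M j = ∏ j ∈ Finset.range t, M j :=
    (Finset.prod_subset (Finset.range_subset_range.2 htN) (fun j _ hj => by
      rw [Finset.mem_range, not_lt] at hj
      exact hMgt j (by omega) (by omega))).symm
  rw [hsub]
  conv_lhs => rw [show t = (t - 1) + 1 by omega]
  rw [Finset.prod_range_succ]
  congr 1
  · refine Finset.prod_congr rfl (fun j hj => ?_)
    rw [Finset.mem_range] at hj
    rw [hMdef]
    simp only
    rw [if_pos (by omega)]
  · rw [hMdef]
    simp only
    rw [if_neg (by omega), if_pos (by omega)]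

end BetaStacyAux

namespace BetaStacyAux
open MeasureTheory

variable {c F0 : ℕ+ → ENNReal}

lemma base_measurable (tv : ℕ → ℕ+) (m : ℕ) :
    MeasurableSet {ω : ℕ → ℕ+ | ∀ k < m, ω k = tv k} := by
  have h : {ω : ℕ → ℕ+ | ∀ k < m, ω k = tv k} =
      ⋂ k ∈ Set.Iio m, (fun ω : ℕ → ℕ+ => ω k) ⁻¹' {tv k} := by
    ext ω; simp [Set.mem_iInter]
  rw [h]
  exact MeasurableSet.biInter (Set.to_countable _)
    (fun k _ => measurable_pi_apply k MeasurableSpace.measurableSet_top)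

lemma measure_step
    (ρ : Measure (ℕ → ℕ+)) [IsProbabilityMeasure ρ]
    (hρ : ∀ (n t : ℕ) (tv : ℕ → ℕ+),
      ρ {ω | (∀ k < n, ω k = tv k) ∧ t < (ω n : ℕ)} =
        ρ {ω | ∀ k < n, ω k = tv k} *
          ∏ s ∈ Finset.range t, (1 - qfun c F0 tv n s))
    (tv : ℕ → ℕ+) (n : ℕ) :
    ρ {ω | ∀ k < n + 1, ω k = tv k} =
      ρ {ω | ∀ k < n, ω k = tv k} *
        ((∏ j ∈ Finset.range ((tv n : ℕ) - 1), (1 - qfun c F0 tv n j)) *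
          qfun c F0 tv n ((tv n : ℕ) - 1)) := by
  set t := (tv n : ℕ) with htdef
  have ht1 : 1 ≤ t := (tv n).pos
  set A : Set (ℕ → ℕ+) := {ω | (∀ k < n, ω k = tv k) ∧ t - 1 < (ω n : ℕ)} with hAdef
  set B : Set (ℕ → ℕ+) := {ω | (∀ k < n, ω k = tv k) ∧ t < (ω n : ℕ)} with hBdef
  have hBsub : B ⊆ A := fun ω hω => ⟨hω.1, by have := hω.2; omega⟩
  have hBmeas : MeasurableSet B := by
    have h : B = {ω : ℕ → ℕ+ | ∀ k < n, ω k = tv k} ∩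
        ((fun ω : ℕ → ℕ+ => ω n) ⁻¹' {x | t < (x : ℕ)}) := rfl
    rw [h]
    exact (base_measurable tv n).inter
      (measurable_pi_apply n MeasurableSpace.measurableSet_top)
  have hset : {ω : ℕ → ℕ+ | ∀ k < n + 1, ω k = tv k} = A \ B := by
    ext ω
    simp only [Set.mem_setOf_eq, Set.mem_diff, hAdef, hBdef]
    constructor
    · intro h
      have hbase : ∀ k < n, ω k = tv k := fun k hk => h k (by omega)
      have hn : ω n = tv n := h n (Nat.lt_succ_self n)
      have hcoe : (ω n : ℕ) = t := by rw [hn]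
      exact ⟨⟨hbase, by omega⟩, fun hB' => by omega⟩
    · rintro ⟨⟨hbase, hgt⟩, hnB⟩
      intro k hk
      rcases Nat.lt_succ_iff_lt_or_eq.1 hk with hk' | hk'
      · exact hbase k hk'
      · subst hk'
        have hle : ¬ t < (ω k : ℕ) := fun h => hnB ⟨hbase, h⟩
        exact PNat.coe_injective (by omega)
  have hA := hρ n (t - 1) tv
  have hB := hρ n t tv
  rw [show Finset.range t = Finset.range ((t - 1) + 1) by rw [Nat.sub_add_cancel ht1],
    Finset.prod_range_succ, ← mul_assoc] at hB
  set a : ENNReal := ρ {ω | ∀ k < n, ω k = tv k} *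
    ∏ j ∈ Finset.range (t - 1), (1 - qfun c F0 tv n j) with hadef
  have ha_ne_top : a ≠ ⊤ := by rw [← hA]; exact measure_ne_top ρ A
  have hq_le : qfun c F0 tv n (t - 1) ≤ 1 := by
    refine ENNReal.div_le_of_le_mul ?_
    rw [one_mul]
    calc c (t-1).succPNat * F0 (t-1).succPNat + (dCount tv n (t-1).succPNat : ENNReal)
        ≤ c (t-1).succPNat * F0 (t-1).succPNat + c (t-1).succPNat * survF0 F0 (t-1).succPNat
          + (dCount tv n (t-1).succPNat : ENNReal) :=
          add_le_add le_self_add le_rfl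
      _ ≤ _ := le_self_add
  rw [hset, measure_diff hBsub hBmeas.nullMeasurableSet (measure_ne_top ρ B), hA, hB]
  have hkey : a = a * qfun c F0 tv n (t - 1) + a * (1 - qfun c F0 tv n (t - 1)) := by
    rw [← mul_add, add_tsub_cancel_of_le hq_le, mul_one]
  rw [ENNReal.sub_eq_of_eq_add
    (ENNReal.mul_ne_top ha_ne_top (ne_top_of_le_ne_top ENNReal.one_ne_top tsub_le_self)) hkey,
    hadef, mul_assoc]

end BetaStacyAux


open BetaStacyAux

/-- **finite-dimensional law and exchangeability of the beta-Stacy urn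
system.**  For every `n ≥ 1` and `t_{1:n} ∈ ℕ+^n`,
`ρ(T_1 = t_1, …, T_n = t_n) = ∏_{s≥1} α_s^{(d_s)} β_s^{(w_s)} / (α_s+β_s)^{(d_s+w_s)}`
(ascending factorials; only finitely many factors differ from `1`).  In particular this
probability is invariant under permutations of `(t_1, …, t_n)`, so the generated sequence
is exchangeable. -/

theorem betaStacy_urn_finite_dim_law_and_exchangeable
    (c : ℕ+ → ENNReal) (hc : ∀ s, 0 < c s ∧ c s ≠ ⊤)
    (F0 : ℕ+ → ENNReal) (hF0 : ∀ s, 0 < F0 s) (hF0sum : ∑' s, F0 s = 1)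
    (ρ : Measure (ℕ → ℕ+)) [IsProbabilityMeasure ρ]
    (hρ : ∀ (n t : ℕ) (tv : ℕ → ℕ+),
      ρ {ω | (∀ k < n, ω k = tv k) ∧ t < (ω n : ℕ)} =
        ρ {ω | ∀ k < n, ω k = tv k} *
          ∏ s ∈ Finset.range t,
            (1 - (c s.succPNat * F0 s.succPNat + dCount tv n s.succPNat) /
              (c s.succPNat * F0 s.succPNat + c s.succPNat * survF0 F0 s.succPNat +
                dCount tv n s.succPNat + wCount tv n s.succPNat))) :
    (∀ (n : ℕ) (tv : ℕ → ℕ+),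
      ρ {ω | ∀ k < n, ω k = tv k} =
        ∏' s : ℕ+,
          (ascFac (c s * F0 s) (dCount tv n s) * ascFac (c s * survF0 F0 s) (wCount tv n s) /
            ascFac (c s * F0 s + c s * survF0 F0 s) (dCount tv n s + wCount tv n s))) ∧
    (∀ (n : ℕ) (tv : ℕ → ℕ+) (σ : Equiv.Perm (Fin n)),
      ρ {ω | ∀ k : Fin n, ω (k : ℕ) = tv (k : ℕ)} =
        ρ {ω | ∀ k : Fin n, ω (k : ℕ) = tv ((σ k : Fin n) : ℕ)}) := by
  classical
  have hρ' : ∀ (n t : ℕ) (tv : ℕ → ℕ+),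
      ρ {ω | (∀ k < n, ω k = tv k) ∧ t < (ω n : ℕ)} =
        ρ {ω | ∀ k < n, ω k = tv k} *
          ∏ s ∈ Finset.range t, (1 - qfun c F0 tv n s) := hρ
  have claim1 : ∀ (n : ℕ) (tv : ℕ → ℕ+),
      ρ {ω | ∀ k < n, ω k = tv k} = ∏' s : ℕ+, gfac c F0 tv n s := by
    intro n
    induction n with
    | zero =>
      intro tv
      have h1 : {ω : ℕ → ℕ+ | ∀ k < 0, ω k = tv k} = Set.univ := by ext ω; simp
      have h2 : ∀ s : ℕ+, gfac c F0 tv 0 s = 1 := by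
        intro s; simp [gfac, dCount, wCount, ascFac_zero]
      rw [h1, measure_univ, tprod_congr h2, tprod_one]
    | succ n ih =>
      intro tv
      rw [measure_step ρ hρ' tv n, ih tv, tprod_step hc hF0 hF0sum tv n]
  refine ⟨fun n tv => claim1 n tv, ?_⟩
  intro n tv σ
  set tv' : ℕ → ℕ+ := fun k => if h : k < n then tv ((σ ⟨k, h⟩ : Fin n) : ℕ) else tv k
    with htv'
  have hset1 : {ω : ℕ → ℕ+ | ∀ k : Fin n, ω (k : ℕ) = tv (k : ℕ)} =
      {ω | ∀ k < n, ω k = tv k} := by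
    ext ω
    constructor
    · intro h k hk; exact h ⟨k, hk⟩
    · intro h k; exact h k k.isLt
  have hset2 : {ω : ℕ → ℕ+ | ∀ k : Fin n, ω (k : ℕ) = tv ((σ k : Fin n) : ℕ)} =
      {ω | ∀ k < n, ω k = tv' k} := by
    ext ω
    constructor
    · intro h k hk
      have := h ⟨k, hk⟩
      rw [htv']
      simpa [hk] using this
    · intro h k
      have := h (k : ℕ) k.isLt
      rw [htv'] at this
      simpa [k.isLt] using this
  have key : ∀ (p : ℕ+ → Prop) [DecidablePred p],
      ((Finset.range n).filter (fun i => p (tv' i))).card =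
      ((Finset.range n).filter (fun i => p (tv i))).card := by
    intro p _
    rw [Finset.card_filter, Finset.card_filter, ← Fin.sum_univ_eq_sum_range,
      ← Fin.sum_univ_eq_sum_range]
    have h1 : ∀ i : Fin n, (if p (tv' (i : ℕ)) then (1 : ℕ) else 0) =
        (fun j : Fin n => if p (tv (j : ℕ)) then (1 : ℕ) else 0) (σ i) := by
      intro i
      have h2 : tv' (i : ℕ) = tv ((σ i : Fin n) : ℕ) := by
        rw [htv']; simp [i.isLt]
      simp only [h2]
    calc ∑ i : Fin n, (if p (tv' (i : ℕ)) then (1 : ℕ) else 0)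
        = ∑ i : Fin n, (fun j : Fin n => if p (tv (j : ℕ)) then (1 : ℕ) else 0) (σ i) :=
          Finset.sum_congr rfl (fun i _ => h1 i)
      _ = _ := Equiv.sum_comp σ (fun j : Fin n => if p (tv (j : ℕ)) then (1 : ℕ) else 0)
  have hcounts : ∀ s : ℕ+, dCount tv' n s = dCount tv n s ∧
      wCount tv' n s = wCount tv n s := fun s => ⟨key (· = s), key (s < ·)⟩
  rw [hset1, hset2, claim1 n tv, claim1 n tv']
  exact tprod_congr fun s => by
    simp only [gfac, (hcounts s).1, (hcounts s).2]
end

section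
/- (Recurrence of the beta-Stacy urn system.) For every n ≥ 0 and every fixed t_{1:n} ∈ ℕ₊^n, lim_{t→∞} ∏_{s=1}^t [1 − (α_s + d_s)/(α_s + β_s + d_s + w_s)] = 0, where d_s = #{i ≤ n : t_i = s} and w_s = #{i ≤ n : t_i > s}. Consequently each predictive distribution of the beta-Stacy urn system is a proper probability distribution on ℕ₊: the first urn of the system is recurrent, i.e. each generated holding time T_{n+1} is finite almost surely. -/
open Filter

noncomputable def gtail (F0 : ℕ+ → ENNReal) (t : ℕ) : ENNReal :=
  ∑' r : ℕ+, if t < (r : ℕ) then F0 r else 0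

lemma gtail_le_one (F0 : ℕ+ → ENNReal) (hF0sum : ∑' s, F0 s = 1) (t : ℕ) :
    gtail F0 t ≤ 1 := by
  rw [← hF0sum]
  exact ENNReal.tsum_le_tsum fun r => by split <;> simp

lemma gtail_pos (F0 : ℕ+ → ENNReal) (hF0 : ∀ s, 0 < F0 s) (t : ℕ) :
    0 < gtail F0 t := by
  have h : (if t < ((⟨t + 1, t.succ_pos⟩ : ℕ+) : ℕ) then F0 ⟨t + 1, t.succ_pos⟩ else 0)
      ≤ gtail F0 t := ENNReal.le_tsum _
  simp only [PNat.mk_ofNat, PNat.mk_coe] at h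
  calc 0 < F0 ⟨t + 1, t.succ_pos⟩ := hF0 _
    _ ≤ gtail F0 t := by simpa [Nat.lt_succ_iff] using h

lemma gtail_succ (F0 : ℕ+ → ENNReal) (t : ℕ) :
    gtail F0 t = F0 ⟨t + 1, t.succ_pos⟩ + gtail F0 (t + 1) := by
  classical
  have key : ∀ r : ℕ+, (if t < (r : ℕ) then F0 r else 0)
      = (if r = ⟨t + 1, t.succ_pos⟩ then F0 ⟨t + 1, t.succ_pos⟩ else 0)
        + (if t + 1 < (r : ℕ) then F0 r else 0) := by
    intro r
    rcases lt_trichotomy ((r : ℕ)) (t + 1) with h | h | h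
    · rw [if_neg (Nat.not_lt.mpr (Nat.lt_succ_iff.mp h)),
        if_neg (fun he => absurd (he ▸ h) (lt_irrefl _)),
        if_neg (fun he => absurd h (not_lt.mpr (le_of_lt he))), add_zero]
    · have hr : r = ⟨t + 1, t.succ_pos⟩ := PNat.coe_injective h
      rw [if_pos (by rw [h]; exact Nat.lt_succ_self t), if_pos hr,
        if_neg (by rw [h]; exact lt_irrefl _), add_zero, hr]
    · rw [if_pos (Nat.lt_of_succ_lt h), if_pos h,
        if_neg (fun he => absurd (he ▸ h) (lt_irrefl _)), zero_add]
  unfold gtail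
  rw [tsum_congr key, ENNReal.tsum_add]
  congr 1
  letI : DecidablePred (· = (⟨t + 1, t.succ_pos⟩ : ℕ+)) := fun _ => Classical.propDecidable _
  exact tsum_ite_eq (⟨t + 1, t.succ_pos⟩ : ℕ+) (fun _ => F0 ⟨t + 1, t.succ_pos⟩)

lemma gtail_tendsto (F0 : ℕ+ → ENNReal) (hF0sum : ∑' s, F0 s = 1) :
    Tendsto (gtail F0) atTop (nhds 0) := by
  set f : ℕ → ENNReal := fun k => if h : 0 < k then F0 ⟨k, h⟩ else 0 with hf
  have hcoe : ∀ r : ℕ+, f (r : ℕ) = F0 r := by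
    intro r; obtain ⟨rv, hv⟩ := r; show (if h : 0 < rv then F0 ⟨rv, h⟩ else 0) = _; rw [dif_pos hv]
  have hinj : Function.Injective (fun r : ℕ+ => (r : ℕ)) := PNat.coe_injective
  have hfsum : ∑' k : ℕ, f k = 1 := by
    rw [← hF0sum]
    rw [← Function.Injective.tsum_eq hinj (f := f)]
    · exact tsum_congr hcoe
    · intro x hx
      rcases Nat.eq_zero_or_pos x with h0 | h0
      · exfalso; apply hx; simp [hf, h0]
      · exact ⟨⟨x, h0⟩, rfl⟩

  have hgt : ∀ t : ℕ, gtail F0 t = ∑' k : ℕ, f (k + (t + 1)) := by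
    intro t
    have h1 : gtail F0 t = ∑' x : ℕ, (if t < x then f x else 0) := by
      unfold gtail
      rw [← Function.Injective.tsum_eq hinj (f := fun x => if t < x then f x else 0)]
      · exact tsum_congr fun r => by rw [hcoe]
      · intro x hx
        rcases Nat.eq_zero_or_pos x with h0 | h0
        · exfalso; apply hx; simp [h0]
        · exact ⟨⟨x, h0⟩, rfl⟩
    have h2 : ∑' k : ℕ, f (k + (t + 1)) = ∑' x : ℕ, (if t < x then f x else 0) := by
      rw [← Function.Injective.tsum_eq (f := fun x => if t < x then f x else 0)
        (g := fun k : ℕ => k + (t + 1)) (add_left_injective (t + 1))]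
      · exact tsum_congr fun k => by
          show f (k + (t + 1)) = (if t < k + (t + 1) then f (k + (t + 1)) else 0)
          rw [if_pos (by omega)]
      · intro x hx
        by_cases h : t < x
        · exact ⟨x - (t + 1), show x - (t + 1) + (t + 1) = x by omega⟩
        · exfalso; apply hx; simp [h]
    rw [h1, ← h2]
  have := ENNReal.tendsto_sum_nat_add f (by rw [hfsum]; exact ENNReal.one_ne_top)
  have comp := this.comp (tendsto_add_atTop_nat 1)
  convert comp using 1
  funext t
  exact hgt t

/-- **recurrence of the beta-Stacy urn system.**  For every `n ≥ 0` and
every fixed `t_{1:n} ∈ ℕ+^n`,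
`∏_{s=1}^t [1 - (α_s + d_s)/(α_s + β_s + d_s + w_s)] → 0` as `t → ∞`.
Consequently each predictive distribution of the beta-Stacy urn system is a proper
probability distribution on `ℕ+`: the first urn of the system is recurrent, i.e. each
generated holding time `T_{n+1}` is finite almost surely. -/
theorem betaStacy_urn_recurrent
    (c : ℕ+ → ENNReal) (hc : ∀ s, 0 < c s ∧ c s ≠ ⊤)
    (F0 : ℕ+ → ENNReal) (hF0 : ∀ s, 0 < F0 s) (hF0sum : ∑' s, F0 s = 1)
    (n : ℕ) (tv : Fin n → ℕ+) :
    Tendsto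
      (fun t : ℕ => ∏ s ∈ Finset.range t,
        (1 - (c s.succPNat * F0 s.succPNat +
            (Finset.univ.filter (fun i : Fin n => tv i = s.succPNat)).card) /
          (c s.succPNat * F0 s.succPNat + c s.succPNat * survF0 F0 s.succPNat +
            (Finset.univ.filter (fun i : Fin n => tv i = s.succPNat)).card +
            (Finset.univ.filter (fun i : Fin n => s.succPNat < tv i)).card)))
      atTop (nhds 0) := by
  classical
  -- basic finiteness facts
  have hF0top : ∀ r : ℕ+, F0 r ≠ ⊤ := fun r =>
    ne_top_of_le_ne_top ENNReal.one_ne_top (hF0sum ▸ ENNReal.le_tsum r)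
  have hgpos : ∀ t, 0 < gtail F0 t := gtail_pos F0 hF0
  have hgtop : ∀ t, gtail F0 t ≠ ⊤ := fun t =>
    ne_top_of_le_ne_top ENNReal.one_ne_top (gtail_le_one F0 hF0sum t)
  set N : ℕ := Finset.univ.sup (fun i : Fin n => (tv i : ℕ)) with hN
  have htv : ∀ i : Fin n, (tv i : ℕ) ≤ N := fun i => by
    rw [hN]; exact Finset.le_sup (f := fun i : Fin n => ((tv i : ℕ))) (Finset.mem_univ i)
  set a : ℕ → ENNReal := fun s =>
    (1 - (c s.succPNat * F0 s.succPNat +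
        (Finset.univ.filter (fun i : Fin n => tv i = s.succPNat)).card) /
      (c s.succPNat * F0 s.succPNat + c s.succPNat * survF0 F0 s.succPNat +
        (Finset.univ.filter (fun i : Fin n => tv i = s.succPNat)).card +
        (Finset.univ.filter (fun i : Fin n => s.succPNat < tv i)).card)) with ha
  have ha_le : ∀ s, a s ≤ 1 := fun s => tsub_le_self
  have hsurv : ∀ s : ℕ, survF0 F0 s.succPNat = gtail F0 (s + 1) := by
    intro s
    refine tsum_congr fun r => ?_
    refine if_congr ?_ rfl rfl
    rw [← PNat.coe_lt_coe, Nat.succPNat_coe]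
  have hF0mk : ∀ s : ℕ, F0 s.succPNat = F0 ⟨s + 1, s.succ_pos⟩ := fun s => rfl
  -- key multiplicative identity for s ≥ N
  have key : ∀ s, N ≤ s → a s * gtail F0 s = gtail F0 (s + 1) := by
    intro s hs
    have hfilt1 : (Finset.univ.filter (fun i : Fin n => tv i = s.succPNat)) = ∅ := by
      refine Finset.filter_eq_empty_iff.mpr fun i _ he => ?_
      have h1 : (tv i : ℕ) = s + 1 := by rw [he, Nat.succPNat_coe]
      have h2 := htv i
      omega
    have hfilt2 : (Finset.univ.filter (fun i : Fin n => s.succPNat < tv i)) = ∅ := by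
      refine Finset.filter_eq_empty_iff.mpr fun i _ he => ?_
      have h1 : ((s.succPNat : ℕ)) < (tv i : ℕ) := ((PNat.coe_lt_coe _ _).mpr he)
      rw [Nat.succPNat_coe] at h1
      have h2 := htv i
      omega
    have hc0 : c s.succPNat ≠ 0 := (hc s.succPNat).1.ne'
    have hctop : c s.succPNat ≠ ⊤ := (hc s.succPNat).2
    have hden : c s.succPNat * F0 s.succPNat + c s.succPNat * survF0 F0 s.succPNat
        = c s.succPNat * gtail F0 s := by
      rw [hsurv, ← mul_add]
      congr 1
      rw [gtail_succ F0 s]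
      rfl
    have has : a s = 1 - F0 s.succPNat / gtail F0 s := by
      rw [ha]
      simp only [hfilt1, hfilt2, Finset.card_empty, Nat.cast_zero, add_zero]
      rw [hden, ENNReal.mul_div_mul_left _ _ hc0 hctop]
    rw [has, ENNReal.sub_mul (fun _ _ => hgtop s), one_mul,
      ENNReal.div_mul_cancel (hgpos s).ne' (hgtop s)]
    rw [hF0mk s, gtail_succ F0 s]; exact ENNReal.add_sub_cancel_left (hF0top _)
  -- telescoping
  have tele : ∀ t, N ≤ t →
      (∏ s ∈ Finset.Ico N t, a s) * gtail F0 N = gtail F0 t := by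
    intro t ht
    induction t, ht using Nat.le_induction with
    | base => simp
    | succ t ht ih =>
      rw [Finset.prod_Ico_succ_top ht, mul_comm (∏ s ∈ Finset.Ico N t, a s) (a t),
        mul_assoc, ih, key t ht]
  -- bound on the full product
  have hbound : ∀ t, N ≤ t →
      (∏ s ∈ Finset.range t, a s) ≤ gtail F0 t * (gtail F0 N)⁻¹ := by
    intro t ht
    have hsplit : (∏ s ∈ Finset.range N, a s) * ∏ s ∈ Finset.Ico N t, a s
        = ∏ s ∈ Finset.range t, a s := Finset.prod_range_mul_prod_Ico a ht
    have h1 : (∏ s ∈ Finset.range t, a s) ≤ ∏ s ∈ Finset.Ico N t, a s := by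
      rw [← hsplit]
      calc (∏ s ∈ Finset.range N, a s) * ∏ s ∈ Finset.Ico N t, a s
          ≤ 1 * ∏ s ∈ Finset.Ico N t, a s :=
            mul_le_mul_of_nonneg_right (Finset.prod_le_one (fun i _ => zero_le)
              (fun i _ => ha_le i)) zero_le
        _ = ∏ s ∈ Finset.Ico N t, a s := one_mul _
    have h2 : (∏ s ∈ Finset.Ico N t, a s) = gtail F0 t * (gtail F0 N)⁻¹ := by
      have := tele t ht
      rw [← this, mul_assoc, ENNReal.mul_inv_cancel (hgpos N).ne' (hgtop N), mul_one]
    rw [← h2]; exact h1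
  -- conclude
  have hupper : Tendsto (fun t => gtail F0 t * (gtail F0 N)⁻¹) atTop (nhds 0) := by
    have := ENNReal.Tendsto.mul_const (gtail_tendsto F0 hF0sum)
      (Or.inr (ENNReal.inv_ne_top.mpr (hgpos N).ne'))
    simpa using this
  have : Tendsto (fun t : ℕ => ∏ s ∈ Finset.range t, a s) atTop (nhds ⊥) := by
    refine tendsto_nhds_bot_mono (by simpa using hupper) ?_
    filter_upwards [eventually_ge_atTop N] with t ht
    exact hbound t ht
  simpa using this
end
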